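/- Let x₁, x₂ : [0,∞) → ℝ be càdlàg functions with x₁(0) ≥ 0 and x₂(0) ≥ 0. Then for every t ≥ 0, sup_{0 ≤ s ≤ t} |Γ₁(x₁)(s) − Γ₁(x₂)(s)| ≤ 2 · sup_{0 ≤ s ≤ t} |x₁(s) − x₂(s)|, where Γ₁(x)(t) = x(t) + sup_{0 ≤ s ≤ t} max(−x(s), 0). -/

import Mathlib

/-- A function `x : ℝ → ℝ`, viewed as a path on `[0,∞)`, is càdlàg if it is
right-continuous at every `t ≥ 0` and has left limits at every `t > 0`. -/
def Cadlag (x : ℝ → ℝ) : Prop :=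
  (∀ t : ℝ, 0 ≤ t → ContinuousWithinAt x (Set.Ici t) t) ∧
  (∀ t : ℝ, 0 < t → ∃ l : ℝ, Filter.Tendsto x (nhdsWithin t (Set.Iio t)) (nhds l))

/-- `Γ₂(x)(t) = sup_{0 ≤ s ≤ t} max(−x(s), 0)`. -/
noncomputable def Gamma2 (x : ℝ → ℝ) (t : ℝ) : ℝ :=
  sSup ((fun s => max (-x s) 0) '' Set.Icc 0 t)

/-- `Γ₁(x)(t) = x(t) + Γ₂(x)(t)`. -/
noncomputable def Gamma1 (x : ℝ → ℝ) (t : ℝ) : ℝ := x t + Gamma2 x t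

/-- A càdlàg function is bounded on `[0, t]`. -/
lemma cadlag_bdd {x : ℝ → ℝ} (h : Cadlag x) {t : ℝ} (ht : 0 ≤ t) :
    ∃ M : ℝ, ∀ u ∈ Set.Icc (0:ℝ) t, |x u| ≤ M := by
  have := (isCompact_Icc : IsCompact (Set.Icc (0:ℝ) t)).induction_on
    (p := fun S => ∃ M : ℝ, ∀ u ∈ S, |x u| ≤ M)
    ⟨0, by simp⟩
    (fun s t hst ⟨M, hM⟩ => ⟨M, fun u hu => hM u (hst hu)⟩)
    (fun s t ⟨M, hM⟩ ⟨N, hN⟩ => ⟨max M N, by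
      rintro u (hu | hu)
      · exact le_trans (hM u hu) (le_max_left _ _)
      · exact le_trans (hN u hu) (le_max_right _ _)⟩)
    ?_
  · exact this
  · intro s hs
    have hs0 : (0:ℝ) ≤ s := hs.1
    have hright : ∀ᶠ u in nhdsWithin s (Set.Ici s), |x u| ≤ |x s| + 1 := by
      have := (h.1 s hs0).abs
      exact this.eventually_le_const (by linarith [abs_nonneg (x s)])
    rcases eq_or_lt_of_le hs0 with h0 | h0
    · -- s = 0
      subst h0
      have hsub : Set.Icc (0:ℝ) t ⊆ Set.Ici (0:ℝ) := fun u hu => hu.1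
      have : ∀ᶠ u in nhdsWithin 0 (Set.Icc (0:ℝ) t), |x u| ≤ |x 0| + 1 :=
        (nhdsWithin_mono _ hsub) hright
      exact ⟨{u | |x u| ≤ |x 0| + 1}, this, ⟨|x 0| + 1, fun u hu => hu⟩⟩
    · obtain ⟨l, hl⟩ := h.2 s h0
      have hleft : ∀ᶠ u in nhdsWithin s (Set.Iio s), |x u| ≤ |l| + 1 :=
        hl.abs.eventually_le_const (by linarith [abs_nonneg l])
      set C := max (|x s| + 1) (|l| + 1) with hC
      have h1 : ∀ᶠ u in nhdsWithin s (Set.Iio s), |x u| ≤ C :=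
        hleft.mono fun u hu => le_trans hu (le_max_right _ _)
      have h2 : ∀ᶠ u in nhdsWithin s (Set.Ici s), |x u| ≤ C :=
        hright.mono fun u hu => le_trans hu (le_max_left _ _)
      have hnhds : ∀ᶠ u in nhds s, |x u| ≤ C := by
        rw [← nhdsLT_sup_nhdsGE s]
        exact ⟨h1, h2⟩
      have : ∀ᶠ u in nhdsWithin s (Set.Icc (0:ℝ) t), |x u| ≤ C :=
        nhdsWithin_le_nhds hnhds
      exact ⟨{u | |x u| ≤ C}, this, ⟨C, fun u hu => hu⟩⟩

lemma gamma2_diff_le (x₁ x₂ : ℝ → ℝ) {s D : ℝ} (hs : 0 ≤ s)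
    (hb : BddAbove ((fun u => max (-x₂ u) 0) '' Set.Icc 0 s))
    (h : ∀ u ∈ Set.Icc (0:ℝ) s, |x₁ u - x₂ u| ≤ D) :
    Gamma2 x₁ s ≤ Gamma2 x₂ s + D := by
  apply csSup_le ((Set.nonempty_Icc.mpr hs).image _)
  rintro _ ⟨u, hu, rfl⟩
  have h2 : max (-x₂ u) 0 ≤ Gamma2 x₂ s := le_csSup hb ⟨u, hu, rfl⟩
  have habs : x₂ u - x₁ u ≤ |x₁ u - x₂ u| := by
    rw [abs_sub_comm]; exact le_abs_self _
  have h1 : max (-x₁ u) 0 ≤ max (-x₂ u) 0 + |x₁ u - x₂ u| := by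
    apply max_le
    · have := le_max_left (-x₂ u) 0; linarith
    · have := le_max_right (-x₂ u) 0; have := abs_nonneg (x₁ u - x₂ u); linarith
  have := h u hu
  linarith

/-- Lipschitz continuity of the first component of the Skorokhod map:
`sup_{0 ≤ s ≤ t} |Γ₁(x₁)(s) − Γ₁(x₂)(s)| ≤ 2 sup_{0 ≤ s ≤ t} |x₁(s) − x₂(s)|`. -/
theorem skorokhod_map_fst_lipschitz
    (x₁ x₂ : ℝ → ℝ) (h₁ : Cadlag x₁) (h₂ : Cadlag x₂)
    (h₁0 : 0 ≤ x₁ 0) (h₂0 : 0 ≤ x₂ 0) (t : ℝ) (ht : 0 ≤ t) :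
    sSup ((fun s => |Gamma1 x₁ s - Gamma1 x₂ s|) '' Set.Icc 0 t) ≤
      2 * sSup ((fun s => |x₁ s - x₂ s|) '' Set.Icc 0 t) := by
  obtain ⟨M₁, hM₁⟩ := cadlag_bdd h₁ ht
  obtain ⟨M₂, hM₂⟩ := cadlag_bdd h₂ ht
  set D := sSup ((fun s => |x₁ s - x₂ s|) '' Set.Icc 0 t) with hD
  have hbddD : BddAbove ((fun s => |x₁ s - x₂ s|) '' Set.Icc 0 t) := by
    refine ⟨M₁ + M₂, ?_⟩
    rintro _ ⟨u, hu, rfl⟩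
    have h1 := hM₁ u hu
    have h2 := hM₂ u hu
    have : |x₁ u - x₂ u| ≤ |x₁ u| + |x₂ u| := abs_sub _ _
    linarith
  have hDle : ∀ u ∈ Set.Icc (0:ℝ) t, |x₁ u - x₂ u| ≤ D :=
    fun u hu => le_csSup hbddD ⟨u, hu, rfl⟩
  -- boundedness of the Gamma2 supremand
  have hb : ∀ (x : ℝ → ℝ) (M : ℝ), (∀ u ∈ Set.Icc (0:ℝ) t, |x u| ≤ M) →
      ∀ s ∈ Set.Icc (0:ℝ) t, BddAbove ((fun u => max (-x u) 0) '' Set.Icc 0 s) := by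
    intro x M hM s hs
    refine ⟨M, ?_⟩
    rintro _ ⟨u, hu, rfl⟩
    have hut : u ∈ Set.Icc (0:ℝ) t := ⟨hu.1, le_trans hu.2 hs.2⟩
    have := hM u hut
    have := abs_nonneg (x u)
    apply max_le
    · have := neg_le_abs (x u); linarith
    · linarith
  apply csSup_le ((Set.nonempty_Icc.mpr ht).image _)
  rintro _ ⟨s, hs, rfl⟩
  have hsub : ∀ u ∈ Set.Icc (0:ℝ) s, u ∈ Set.Icc (0:ℝ) t :=
    fun u hu => ⟨hu.1, le_trans hu.2 hs.2⟩
  have hD' : ∀ u ∈ Set.Icc (0:ℝ) s, |x₁ u - x₂ u| ≤ D :=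
    fun u hu => hDle u (hsub u hu)
  have k1 : Gamma2 x₁ s ≤ Gamma2 x₂ s + D :=
    gamma2_diff_le x₁ x₂ hs.1 (hb x₂ M₂ hM₂ s hs) hD'
  have k2 : Gamma2 x₂ s ≤ Gamma2 x₁ s + D := by
    refine gamma2_diff_le x₂ x₁ hs.1 (hb x₁ M₁ hM₁ s hs) ?_
    intro u hu; rw [abs_sub_comm]; exact hD' u hu
  have hkey : |Gamma2 x₁ s - Gamma2 x₂ s| ≤ D := abs_sub_le_iff.mpr ⟨by linarith, by linarith⟩
  have hfs : |x₁ s - x₂ s| ≤ D := hDle s hs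
  have : |Gamma1 x₁ s - Gamma1 x₂ s| ≤ |x₁ s - x₂ s| + |Gamma2 x₁ s - Gamma2 x₂ s| := by
    have := abs_add_le (x₁ s - x₂ s) (Gamma2 x₁ s - Gamma2 x₂ s)
    simp only [Gamma1]
    calc |x₁ s + Gamma2 x₁ s - (x₂ s + Gamma2 x₂ s)|
        = |(x₁ s - x₂ s) + (Gamma2 x₁ s - Gamma2 x₂ s)| := by ring_nf
      _ ≤ _ := abs_add_le _ _
  linarith
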